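/- If a function f : U → ℝ on an open set U ⊆ ℝ^m has locally Lipschitz derivative (in particular if f is C^∞), then f is locally delta-convex. -/

import Mathlib

open Set
open Metric

/-- If `h` has a monotone derivative on a convex set, then `h` is convex on it. -/
lemma convexOn_of_monotone_fderiv {E : Type*} [NormedAddCommGroup E] [NormedSpace ℝ E]
    {s : Set E} (hs : Convex ℝ s) {h : E → ℝ} {h' : E → E →L[ℝ] ℝ}
    (hd : ∀ x ∈ s, HasFDerivAt h (h' x) x)
    (hm : ∀ x ∈ s, ∀ y ∈ s, 0 ≤ (h' y - h' x) (y - x)) : ConvexOn ℝ s h := by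
  refine ⟨hs, fun x hx y hy a b ha hb hab => ?_⟩
  set v := y - x with hv
  set c : ℝ → E := fun t => x + t • v with hc
  have hcmem : ∀ t ∈ Icc (0:ℝ) 1, c t ∈ s := fun t ht =>
    hs.add_smul_sub_mem hx hy ht
  have hcderiv : ∀ t : ℝ, HasDerivAt c v t := by
    intro t
    simpa [hc] using ((hasDerivAt_id t).smul_const v).const_add x
  have hφderiv : ∀ t ∈ Icc (0:ℝ) 1, HasDerivAt (fun t => h (c t)) ((h' (c t)) v) t := by
    intro t ht
    exact (hd (c t) (hcmem t ht)).comp_hasDerivAt t (hcderiv t)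
  have hconv : ConvexOn ℝ (Icc (0:ℝ) 1) (fun t => h (c t)) := by
    apply MonotoneOn.convexOn_of_deriv (convex_Icc 0 1)
    · exact fun t ht => (hφderiv t ht).continuousAt.continuousWithinAt
    · rw [interior_Icc]
      exact fun t ht => ((hφderiv t (Ioo_subset_Icc_self ht)).differentiableAt).differentiableWithinAt
    · rw [interior_Icc]
      intro s1 hs1 t1 ht1 hst
      rw [(hφderiv s1 (Ioo_subset_Icc_self hs1)).deriv, (hφderiv t1 (Ioo_subset_Icc_self ht1)).deriv]
      rcases eq_or_lt_of_le hst with rfl | hlt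
      · exact le_refl _
      · have hmm := hm (c s1) (hcmem s1 (Ioo_subset_Icc_self hs1)) (c t1) (hcmem t1 (Ioo_subset_Icc_self ht1))
        have hdiff : c t1 - c s1 = (t1 - s1) • v := by
          simp only [hc]
          module
        rw [hdiff] at hmm
        rw [map_smul, smul_eq_mul] at hmm
        have h2 : (h' (c t1) - h' (c s1)) v = h' (c t1) v - h' (c s1) v := rfl
        nlinarith [hmm, sub_pos.mpr hlt]
  have h01 : (0:ℝ) ∈ Icc (0:ℝ) 1 := by norm_num
  have h11 : (1:ℝ) ∈ Icc (0:ℝ) 1 := by norm_num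
  have key := hconv.2 h01 h11 ha hb hab
  simp only [smul_eq_mul, mul_zero, mul_one, zero_add] at key
  have hc0 : c 0 = x := by simp [hc]
  have hc1 : c 1 = y := by simp [hc, hv]
  have hcb : c b = a • x + b • y := by
    simp only [hc, hv]
    have hba : a = 1 - b := by linarith
    subst hba
    module
  rw [hc0, hc1, hcb] at key
  simpa [smul_eq_mul] using key


/-- A function `u` is locally delta-convex (DC) on an open set `U` if on every open convex
set compactly contained in `U` it is a difference of two convex functions. -/
def LocallyDC {E : Type*} [NormedAddCommGroup E] [NormedSpace ℝ E]
    (U : Set E) (u : E → ℝ) : Prop :=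
  ∀ Ω' : Set E, IsOpen Ω' → Convex ℝ Ω' → IsCompact (closure Ω') → closure Ω' ⊆ U →
    ∃ g₁ g₂ : E → ℝ, ConvexOn ℝ Ω' g₁ ∧ ConvexOn ℝ Ω' g₂ ∧ ∀ x ∈ Ω', u x = g₁ x - g₂ x

/-- If `f : U → ℝ` has a locally Lipschitz derivative on the open set `U` (in particular if
`f` is smooth), then `f` is locally delta-convex on `U`. -/
theorem stmt_1 {m : ℕ} (U : Set (EuclideanSpace ℝ (Fin m))) (hU : IsOpen U)
    (f : EuclideanSpace ℝ (Fin m) → ℝ)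
    (f' : EuclideanSpace ℝ (Fin m) → (EuclideanSpace ℝ (Fin m) →L[ℝ] ℝ))
    (hderiv : ∀ x ∈ U, HasFDerivAt f (f' x) x)
    (hlip : ∀ x ∈ U, ∃ (L : NNReal) (t : Set (EuclideanSpace ℝ (Fin m))),
      t ∈ nhdsWithin x U ∧ LipschitzOnWith L f' t) :
    LocallyDC U f := by
  intro Ω' hΩo hΩc hcomp hsub
  rcases Ω'.eq_empty_or_nonempty with hne | hne
  · refine ⟨0, 0, ?_, ?_, ?_⟩
    · rw [hne]; exact ⟨convex_empty, fun x hx => absurd hx (notMem_empty x)⟩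
    · rw [hne]; exact ⟨convex_empty, fun x hx => absurd hx (notMem_empty x)⟩
    · rw [hne]; intro x hx; exact absurd hx (notMem_empty x)
  set S := closure Ω' with hS
  have hSU : S ⊆ U := hsub
  have hSne : S.Nonempty := hne.closure
  -- Step A: local Lipschitz data
  have key : ∀ x ∈ S, ∃ (L : NNReal) (r : ℝ), 0 < r ∧ ball x r ⊆ U ∧
      LipschitzOnWith L f' (ball x r) := by
    intro x hx
    obtain ⟨L, t, ht, hlt⟩ := hlip x (hSU hx)
    have htn : t ∩ U ∈ nhds x := by
      have h1 : t ∈ nhds x := by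
        rw [← nhdsWithin_eq_nhds.mpr (hU.mem_nhds (hSU hx))]
        exact ht
      exact Filter.inter_mem h1 (hU.mem_nhds (hSU hx))
    obtain ⟨r, hr, hball⟩ := Metric.mem_nhds_iff.mp htn
    exact ⟨L, r, hr, fun y hy => (hball hy).2, hlt.mono (fun y hy => (hball hy).1)⟩
  choose! L r hr hrU hLip using key
  obtain ⟨T, hTS, hcover⟩ := hcomp.elim_nhds_subcover (fun x => ball x (r x / 2))
    (fun x hx => ball_mem_nhds x (by have := hr x hx; positivity))
  have hTne : T.Nonempty := by
    obtain ⟨p, hp⟩ := hSne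
    obtain ⟨i, hi, _⟩ := mem_iUnion₂.mp (hcover hp)
    exact ⟨i, hi⟩
  set δ := T.inf' hTne (fun i => r i / 2) with hδdef
  have hδpos : 0 < δ := by
    rw [hδdef, Finset.lt_inf'_iff]
    intro i hi
    have := hr i (hTS i hi)
    positivity
  -- continuity and boundedness of f' on S
  have hcont : ContinuousOn f' S := by
    intro x hx
    exact ((hLip x hx).continuousOn.continuousAt
      (ball_mem_nhds x (hr x hx))).continuousWithinAt
  obtain ⟨M, hM⟩ := hcomp.exists_bound_of_continuousOn hcont
  have hM0 : 0 ≤ M := by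
    obtain ⟨p, hp⟩ := hSne
    exact le_trans (norm_nonneg _) (hM p hp)
  set K := max (T.sup' hTne (fun i => (L i : ℝ))) (2 * M / δ) with hKdef
  have hK0 : 0 ≤ K := le_max_of_le_right (by positivity)
  have hKlip : ∀ x ∈ S, ∀ y ∈ S, ‖f' y - f' x‖ ≤ K * ‖y - x‖ := by
    intro x hx y hy
    by_cases hd : dist y x < δ
    · obtain ⟨i, hi, hxi⟩ := mem_iUnion₂.mp (hcover hx)
      have hiS : i ∈ S := hTS i hi
      have hδi : δ ≤ r i / 2 := Finset.inf'_le _ hi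
      have hxball : x ∈ ball i (r i) := by
        have : dist x i < r i / 2 := mem_ball.mp hxi
        have := hr i hiS
        exact mem_ball.mpr (by linarith)
      have hyball : y ∈ ball i (r i) := by
        have h1 : dist y i ≤ dist y x + dist x i := dist_triangle y x i
        have h2 : dist x i < r i / 2 := mem_ball.mp hxi
        exact mem_ball.mpr (by linarith)
      have hLK : (L i : ℝ) ≤ K := le_max_of_le_left (Finset.le_sup' (fun i => (L i : ℝ)) hi)
      calc ‖f' y - f' x‖ = dist (f' y) (f' x) := (dist_eq_norm _ _).symm
        _ ≤ (L i : ℝ) * dist y x := (hLip i hiS).dist_le_mul y hyball x hxball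
        _ ≤ K * ‖y - x‖ := by
            rw [dist_eq_norm]
            exact mul_le_mul_of_nonneg_right hLK (norm_nonneg _)
    · push_neg at hd
      have hdn : δ ≤ ‖y - x‖ := by rwa [← dist_eq_norm]
      calc ‖f' y - f' x‖ ≤ ‖f' y‖ + ‖f' x‖ := norm_sub_le _ _
        _ ≤ 2 * M := by linarith [hM y hy, hM x hx]
        _ = (2 * M / δ) * δ := by field_simp
        _ ≤ (2 * M / δ) * ‖y - x‖ := mul_le_mul_of_nonneg_left hdn (by positivity)
        _ ≤ K * ‖y - x‖ := mul_le_mul_of_nonneg_right (le_max_right _ _) (norm_nonneg _)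
  -- Step B
  have hΩS : Ω' ⊆ S := subset_closure
  have hΩU : Ω' ⊆ U := fun x hx => hSU (hΩS hx)
  refine ⟨fun x => f x + K / 2 * ‖x‖ ^ 2, fun x => K / 2 * ‖x‖ ^ 2, ?_, ?_, ?_⟩
  · -- g₁ convex
    apply convexOn_of_monotone_fderiv hΩc
      (h' := fun z => f' z + (K / 2) • ((2:ℕ) • (innerSL ℝ z)))
    · intro z hz
      exact (hderiv z (hΩU hz)).add
        (((hasStrictFDerivAt_norm_sq z).hasFDerivAt).const_mul (K / 2))
    · intro z hz w hw
      have hb := (f' w - f' z).le_opNorm (w - z)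
      have hKb : ‖f' w - f' z‖ * ‖w - z‖ ≤ K * ‖w - z‖ * ‖w - z‖ := by
        have := hKlip z (hΩS hz) w (hΩS hw)
        nlinarith [norm_nonneg (w - z)]
      have habs : |(f' w - f' z) (w - z)| ≤ K * ‖w - z‖ * ‖w - z‖ := by
        rw [← Real.norm_eq_abs]
        exact le_trans hb hKb
      have hsubap : (f' w - f' z) (w - z) = f' w (w - z) - f' z (w - z) := rfl
      have hinner : (inner ℝ (w - z) (w - z) : ℝ) = inner ℝ w (w - z) - inner ℝ z (w - z) :=
        inner_sub_left _ _ _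
      have hnormsq : (inner ℝ (w - z) (w - z) : ℝ) = ‖w - z‖ ^ 2 :=
        real_inner_self_eq_norm_sq _
      have habs' := abs_le.mp habs
      simp only [two_smul, ContinuousLinearMap.sub_apply, ContinuousLinearMap.add_apply,
        ContinuousLinearMap.smul_apply, innerSL_apply_apply, smul_eq_mul]
      rw [hsubap] at habs'
      nlinarith [habs'.1, hinner, hnormsq, sq_nonneg (‖w - z‖)]
  · -- g₂ convex
    apply convexOn_of_monotone_fderiv hΩc
      (h' := fun z => (K / 2) • ((2:ℕ) • (innerSL ℝ z)))
    · intro z hz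
      exact ((hasStrictFDerivAt_norm_sq z).hasFDerivAt).const_mul (K / 2)
    · intro z hz w hw
      have hinner : (inner ℝ (w - z) (w - z) : ℝ) = inner ℝ w (w - z) - inner ℝ z (w - z) :=
        inner_sub_left _ _ _
      have hnormsq : (inner ℝ (w - z) (w - z) : ℝ) = ‖w - z‖ ^ 2 :=
        real_inner_self_eq_norm_sq _
      simp only [two_smul, ContinuousLinearMap.sub_apply, ContinuousLinearMap.add_apply,
        ContinuousLinearMap.smul_apply, innerSL_apply_apply, smul_eq_mul]
      nlinarith [hinner, hnormsq, sq_nonneg (‖w - z‖)]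
  · intro x hx
    ring
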